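/- arXiv:2005.00297 — 6 statements merged into one kernel-verified Lean document; each statement's English description precedes it below -/
import Mathlib

section
/- Let W be the graph on vertices v_0, v_1, ..., v_5 where v_1 v_2 v_3 v_4 v_5 form a cycle with every cycle edge doubled, and v_0 is joined to each v_i (1 ≤ i ≤ 5) by a single edge. Then for any orientation D of W in which every vertex has outdegree congruent to indegree modulo 3, there exists k with 1 ≤ k ≤ 5 such that the edge v_0 v_k is oriented differently at v_k from the other four edges incident with v_k (i.e., v_0 v_k is the unique edge among the five edges at v_k whose direction at v_k differs from the other four). -/
open Finset

/-- A finite multigraph without loops: each edge `e` has two distinct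
endpoints `fst e` and `snd e`.  An orientation is a map `D : E → Bool`,
where `D e = true` means `e` is directed from `fst e` to `snd e`. -/
structure Multigraph (V : Type) (E : Type) where
  fst : E → V
  snd : E → V
  no_loop : ∀ e, fst e ≠ snd e

namespace Multigraph

variable {V E : Type} [Fintype V] [DecidableEq V] [Fintype E] [DecidableEq E]

/-- The tail (initial vertex) of edge `e` under orientation `D`. -/
def tail (G : Multigraph V E) (D : E → Bool) (e : E) : V :=
  if D e then G.fst e else G.snd e

/-- The head (terminal vertex) of edge `e` under orientation `D`. -/
def head (G : Multigraph V E) (D : E → Bool) (e : E) : V :=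
  if D e then G.snd e else G.fst e

/-- Outdegree `d⁺_D(v)` (as an integer, for convenience). -/
def outDeg (G : Multigraph V E) (D : E → Bool) (v : V) : ℤ :=
  ((univ.filter fun e => G.tail D e = v).card : ℤ)

/-- Indegree `d⁻_D(v)`. -/
def inDeg (G : Multigraph V E) (D : E → Bool) (v : V) : ℤ :=
  ((univ.filter fun e => G.head D e = v).card : ℤ)

/-- `e` is incident with `v`. -/
def Incident (G : Multigraph V E) (v : V) (e : E) : Prop :=
  G.fst e = v ∨ G.snd e = v

instance (G : Multigraph V E) (v : V) : DecidablePred (G.Incident v) := fun e =>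
  inferInstanceAs (Decidable (G.fst e = v ∨ G.snd e = v))

/-- The degree of a vertex. -/
def degree (G : Multigraph V E) (v : V) : ℕ :=
  (univ.filter fun e => G.Incident v e).card

/-- The edge-cut `∂_G(A)`: edges with exactly one endpoint in `A`. -/
def cut (G : Multigraph V E) (A : Finset V) : Finset E :=
  univ.filter fun e => ¬ ((G.fst e ∈ A) ↔ (G.snd e ∈ A))

/-- `G` is `k`-edge-connected: every edge-cut has at least `k` edges. -/
def EdgeConnected (G : Multigraph V E) (k : ℕ) : Prop :=
  ∀ A : Finset V, A.Nonempty → A ≠ univ → k ≤ (G.cut A).card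

/-- A boundary function: values in `ℤ₃` summing to `0`. -/
def IsBoundary (β : V → ZMod 3) : Prop := ∑ v, β v = 0

/-- `D` is a `β`-orientation: `d⁺(v) - d⁻(v) ≡ β v (mod 3)` at every vertex. -/
def IsBetaOrientation (G : Multigraph V E) (β : V → ZMod 3) (D : E → Bool) : Prop :=
  ∀ v : V, ((G.outDeg D v - G.inDeg D v : ℤ) : ZMod 3) = β v

/-- A mod 3-orientation: `d⁺(v) ≡ d⁻(v) (mod 3)` at every vertex. -/
def IsMod3Orientation (G : Multigraph V E) (D : E → Bool) : Prop :=
  ∀ v : V, ((G.outDeg D v - G.inDeg D v : ℤ) : ZMod 3) = 0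

/-- `G` admits a mod 3-orientation (equivalently, a nowhere-zero 3-flow). -/
def Mod3Orientable (G : Multigraph V E) : Prop := ∃ D, G.IsMod3Orientation D

/-- `G` is `ℤ₃`-connected. -/
def Z3Connected (G : Multigraph V E) : Prop :=
  ∀ β : V → ZMod 3, IsBoundary β → ∃ D, G.IsBetaOrientation β D

/-- `G` is `ℤ₃`-extendable at `x`: every pre-orientation of the edges at `x`
compatible with `β x` extends to a `β`-orientation of `G`. -/
def Z3ExtendableAt (G : Multigraph V E) (x : V) : Prop :=
  ∀ β : V → ZMod 3, IsBoundary β →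
    ∀ D₀ : E → Bool, ((G.outDeg D₀ x - G.inDeg D₀ x : ℤ) : ZMod 3) = β x →
      ∃ D : E → Bool, (∀ e, G.Incident x e → D e = D₀ e) ∧ G.IsBetaOrientation β D

/-- `G` is mod-3-extendable at `x`: every pre-orientation of `∂(x)` with
`d⁺(x) ≡ d⁻(x) (mod 3)` extends to a mod 3-orientation of `G`. -/
def Mod3ExtendableAt (G : Multigraph V E) (x : V) : Prop :=
  ∀ D₀ : E → Bool, ((G.outDeg D₀ x - G.inDeg D₀ x : ℤ) : ZMod 3) = 0 →
    ∃ D : E → Bool, (∀ e, G.Incident x e → D e = D₀ e) ∧ G.IsMod3Orientation D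

/-- `A` is a `k`-critical-set: `d(A) ≤ k` but every nonempty proper subset has
larger boundary. -/
def CriticalSet (G : Multigraph V E) (k : ℕ) (A : Finset V) : Prop :=
  A.Nonempty ∧ A ≠ univ ∧ (G.cut A).card ≤ k ∧
    ∀ B : Finset V, B.Nonempty → B ⊂ A → k < (G.cut B).card

/-- The set of edge-cuts of size exactly `k` (as sets of edges). -/
def kCuts (G : Multigraph V E) (k : ℕ) : Finset (Finset E) :=
  ((univ : Finset (Finset V)).filter
    fun A => A.Nonempty ∧ A ≠ univ ∧ (G.cut A).card = k).image G.cut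


/-- The graph `W`: a 5-cycle `v₁v₂v₃v₄v₅` with all cycle edges doubled, plus a
hub `v₀` joined to each `vᵢ` by a single edge. -/
def W : Multigraph (Fin 6) (Fin 15) where
  fst := ![1, 1, 2, 2, 3, 3, 4, 4, 5, 5, 0, 0, 0, 0, 0]
  snd := ![2, 2, 3, 3, 4, 4, 5, 5, 1, 1, 1, 2, 3, 4, 5]
  no_loop := by decide

/-- `e` is the minor-edge at `v` under `D`: it is incident with `v` and its
direction at `v` differs from that of every other edge incident with `v`. -/
def MinorEdgeAt (G : Multigraph V E) (D : E → Bool) (v : V) (e : E) : Prop :=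
  G.Incident v e ∧ ∀ f : E, G.Incident v f → f ≠ e →
    ¬ ((G.head D f = v) ↔ (G.head D e = v))


lemma iteTF (c : Prop) [h : Decidable c] : (if c then True else False) = c := by
  by_cases hc : c <;> simp [hc]

lemma eqc (c : Prop) [h : Decidable c] : (if c then False else True) = ¬ c := by
  by_cases hc : c <;> simp [hc]

lemma idx0 : ((0 : Fin (14+1))) = ⟨0, by omega⟩ := rfl
lemma idx0b : ((0 : Fin 15)) = ⟨0, by omega⟩ := rfl
lemma idx1 : ((Fin.succ 0) : Fin 15) = ⟨1, by omega⟩ := rfl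
lemma idx2 : ((Fin.succ 0).succ : Fin 15) = ⟨2, by omega⟩ := rfl
lemma idx3 : ((Fin.succ 0).succ.succ : Fin 15) = ⟨3, by omega⟩ := rfl
lemma idx4 : ((Fin.succ 0).succ.succ.succ : Fin 15) = ⟨4, by omega⟩ := rfl
lemma idx5 : ((Fin.succ 0).succ.succ.succ.succ : Fin 15) = ⟨5, by omega⟩ := rfl
lemma idx6 : ((Fin.succ 0).succ.succ.succ.succ.succ : Fin 15) = ⟨6, by omega⟩ := rfl
lemma idx7 : ((Fin.succ 0).succ.succ.succ.succ.succ.succ : Fin 15) = ⟨7, by omega⟩ := rfl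
lemma idx8 : ((Fin.succ 0).succ.succ.succ.succ.succ.succ.succ : Fin 15) = ⟨8, by omega⟩ := rfl
lemma idx9 : ((Fin.succ 0).succ.succ.succ.succ.succ.succ.succ.succ : Fin 15) = ⟨9, by omega⟩ := rfl
lemma idx10 : ((Fin.succ 0).succ.succ.succ.succ.succ.succ.succ.succ.succ : Fin 15) = ⟨10, by omega⟩ := rfl
lemma idx11 : ((Fin.succ 0).succ.succ.succ.succ.succ.succ.succ.succ.succ.succ : Fin 15) = ⟨11, by omega⟩ := rfl
lemma idx12 : ((Fin.succ 0).succ.succ.succ.succ.succ.succ.succ.succ.succ.succ.succ : Fin 15) = ⟨12, by omega⟩ := rfl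
lemma idx13 : ((Fin.succ 0).succ.succ.succ.succ.succ.succ.succ.succ.succ.succ.succ.succ : Fin 15) = ⟨13, by omega⟩ := rfl
lemma idx14 : ((Fin.succ 0).succ.succ.succ.succ.succ.succ.succ.succ.succ.succ.succ.succ.succ : Fin 15) = ⟨14, by omega⟩ := rfl

set_option maxRecDepth 10000 in
lemma deg0 (D : Fin 15 → Bool) : ((W.outDeg D 0 - W.inDeg D 0 : ℤ) : ZMod 3) = 0 ↔
    ((cond (D ⟨10, by omega⟩) 1 0 + cond (D ⟨11, by omega⟩) 1 0 + cond (D ⟨12, by omega⟩) 1 0 + cond (D ⟨13, by omega⟩) 1 0 + cond (D ⟨14, by omega⟩) 1 0 : ℕ)) % 3 = 1 := by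
  simp only [outDeg, inDeg, Finset.card_filter]
  simp only [outDeg, inDeg, Finset.card_filter, Fin.sum_univ_succ, Fin.sum_univ_zero, tail, head,
    W, Matrix.cons_val_zero, Matrix.cons_val_one, Matrix.head_cons, Matrix.cons_val_succ]
  simp only [apply_ite (fun x : Fin 6 => x = 0), apply_ite (fun x : Fin 6 => x = 1),
    apply_ite (fun x : Fin 6 => x = 2), apply_ite (fun x : Fin 6 => x = 3),
    apply_ite (fun x : Fin 6 => x = 4), apply_ite (fun x : Fin 6 => x = 5),
    Fin.reduceEq, iteTF, ite_self, ite_true, ite_false, add_zero, zero_add, eqc]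
  simp only [idx0, idx0b, idx1, idx2, idx3, idx4, idx5, idx6, idx7, idx8, idx9, idx10, idx11, idx12, idx13, idx14]
  rcases Bool.eq_false_or_eq_true (D ⟨10, by omega⟩) with h0|h0 <;> rcases Bool.eq_false_or_eq_true (D ⟨11, by omega⟩) with h1|h1 <;> rcases Bool.eq_false_or_eq_true (D ⟨12, by omega⟩) with h2|h2 <;> rcases Bool.eq_false_or_eq_true (D ⟨13, by omega⟩) with h3|h3 <;> rcases Bool.eq_false_or_eq_true (D ⟨14, by omega⟩) with h4|h4 <;> simp only [h0, h1, h2, h3, h4] <;> decide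

set_option maxRecDepth 10000 in
lemma deg1 (D : Fin 15 → Bool) : ((W.outDeg D 1 - W.inDeg D 1 : ℤ) : ZMod 3) = 0 ↔
    ((cond (D ⟨0, by omega⟩) 1 0 + cond (D ⟨1, by omega⟩) 1 0 + cond (!D ⟨8, by omega⟩) 1 0 + cond (!D ⟨9, by omega⟩) 1 0 + cond (!D ⟨10, by omega⟩) 1 0 : ℕ)) % 3 = 1 := by
  simp only [outDeg, inDeg, Finset.card_filter]
  simp only [outDeg, inDeg, Finset.card_filter, Fin.sum_univ_succ, Fin.sum_univ_zero, tail, head,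
    W, Matrix.cons_val_zero, Matrix.cons_val_one, Matrix.head_cons, Matrix.cons_val_succ]
  simp only [apply_ite (fun x : Fin 6 => x = 0), apply_ite (fun x : Fin 6 => x = 1),
    apply_ite (fun x : Fin 6 => x = 2), apply_ite (fun x : Fin 6 => x = 3),
    apply_ite (fun x : Fin 6 => x = 4), apply_ite (fun x : Fin 6 => x = 5),
    Fin.reduceEq, iteTF, ite_self, ite_true, ite_false, add_zero, zero_add, eqc]
  simp only [idx0, idx0b, idx1, idx2, idx3, idx4, idx5, idx6, idx7, idx8, idx9, idx10, idx11, idx12, idx13, idx14]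
  rcases Bool.eq_false_or_eq_true (D ⟨0, by omega⟩) with h0|h0 <;> rcases Bool.eq_false_or_eq_true (D ⟨1, by omega⟩) with h1|h1 <;> rcases Bool.eq_false_or_eq_true (D ⟨8, by omega⟩) with h2|h2 <;> rcases Bool.eq_false_or_eq_true (D ⟨9, by omega⟩) with h3|h3 <;> rcases Bool.eq_false_or_eq_true (D ⟨10, by omega⟩) with h4|h4 <;> simp only [h0, h1, h2, h3, h4] <;> decide

set_option maxRecDepth 10000 in
lemma deg2 (D : Fin 15 → Bool) : ((W.outDeg D 2 - W.inDeg D 2 : ℤ) : ZMod 3) = 0 ↔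
    ((cond (!D ⟨0, by omega⟩) 1 0 + cond (!D ⟨1, by omega⟩) 1 0 + cond (D ⟨2, by omega⟩) 1 0 + cond (D ⟨3, by omega⟩) 1 0 + cond (!D ⟨11, by omega⟩) 1 0 : ℕ)) % 3 = 1 := by
  simp only [outDeg, inDeg, Finset.card_filter]
  simp only [outDeg, inDeg, Finset.card_filter, Fin.sum_univ_succ, Fin.sum_univ_zero, tail, head,
    W, Matrix.cons_val_zero, Matrix.cons_val_one, Matrix.head_cons, Matrix.cons_val_succ]
  simp only [apply_ite (fun x : Fin 6 => x = 0), apply_ite (fun x : Fin 6 => x = 1),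
    apply_ite (fun x : Fin 6 => x = 2), apply_ite (fun x : Fin 6 => x = 3),
    apply_ite (fun x : Fin 6 => x = 4), apply_ite (fun x : Fin 6 => x = 5),
    Fin.reduceEq, iteTF, ite_self, ite_true, ite_false, add_zero, zero_add, eqc]
  simp only [idx0, idx0b, idx1, idx2, idx3, idx4, idx5, idx6, idx7, idx8, idx9, idx10, idx11, idx12, idx13, idx14]
  rcases Bool.eq_false_or_eq_true (D ⟨0, by omega⟩) with h0|h0 <;> rcases Bool.eq_false_or_eq_true (D ⟨1, by omega⟩) with h1|h1 <;> rcases Bool.eq_false_or_eq_true (D ⟨2, by omega⟩) with h2|h2 <;> rcases Bool.eq_false_or_eq_true (D ⟨3, by omega⟩) with h3|h3 <;> rcases Bool.eq_false_or_eq_true (D ⟨11, by omega⟩) with h4|h4 <;> simp only [h0, h1, h2, h3, h4] <;> decide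

set_option maxRecDepth 10000 in
lemma deg3 (D : Fin 15 → Bool) : ((W.outDeg D 3 - W.inDeg D 3 : ℤ) : ZMod 3) = 0 ↔
    ((cond (!D ⟨2, by omega⟩) 1 0 + cond (!D ⟨3, by omega⟩) 1 0 + cond (D ⟨4, by omega⟩) 1 0 + cond (D ⟨5, by omega⟩) 1 0 + cond (!D ⟨12, by omega⟩) 1 0 : ℕ)) % 3 = 1 := by
  simp only [outDeg, inDeg, Finset.card_filter]
  simp only [outDeg, inDeg, Finset.card_filter, Fin.sum_univ_succ, Fin.sum_univ_zero, tail, head,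
    W, Matrix.cons_val_zero, Matrix.cons_val_one, Matrix.head_cons, Matrix.cons_val_succ]
  simp only [apply_ite (fun x : Fin 6 => x = 0), apply_ite (fun x : Fin 6 => x = 1),
    apply_ite (fun x : Fin 6 => x = 2), apply_ite (fun x : Fin 6 => x = 3),
    apply_ite (fun x : Fin 6 => x = 4), apply_ite (fun x : Fin 6 => x = 5),
    Fin.reduceEq, iteTF, ite_self, ite_true, ite_false, add_zero, zero_add, eqc]
  simp only [idx0, idx0b, idx1, idx2, idx3, idx4, idx5, idx6, idx7, idx8, idx9, idx10, idx11, idx12, idx13, idx14]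
  rcases Bool.eq_false_or_eq_true (D ⟨2, by omega⟩) with h0|h0 <;> rcases Bool.eq_false_or_eq_true (D ⟨3, by omega⟩) with h1|h1 <;> rcases Bool.eq_false_or_eq_true (D ⟨4, by omega⟩) with h2|h2 <;> rcases Bool.eq_false_or_eq_true (D ⟨5, by omega⟩) with h3|h3 <;> rcases Bool.eq_false_or_eq_true (D ⟨12, by omega⟩) with h4|h4 <;> simp only [h0, h1, h2, h3, h4] <;> decide

set_option maxRecDepth 10000 in
lemma deg4 (D : Fin 15 → Bool) : ((W.outDeg D 4 - W.inDeg D 4 : ℤ) : ZMod 3) = 0 ↔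
    ((cond (!D ⟨4, by omega⟩) 1 0 + cond (!D ⟨5, by omega⟩) 1 0 + cond (D ⟨6, by omega⟩) 1 0 + cond (D ⟨7, by omega⟩) 1 0 + cond (!D ⟨13, by omega⟩) 1 0 : ℕ)) % 3 = 1 := by
  simp only [outDeg, inDeg, Finset.card_filter]
  simp only [outDeg, inDeg, Finset.card_filter, Fin.sum_univ_succ, Fin.sum_univ_zero, tail, head,
    W, Matrix.cons_val_zero, Matrix.cons_val_one, Matrix.head_cons, Matrix.cons_val_succ]
  simp only [apply_ite (fun x : Fin 6 => x = 0), apply_ite (fun x : Fin 6 => x = 1),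
    apply_ite (fun x : Fin 6 => x = 2), apply_ite (fun x : Fin 6 => x = 3),
    apply_ite (fun x : Fin 6 => x = 4), apply_ite (fun x : Fin 6 => x = 5),
    Fin.reduceEq, iteTF, ite_self, ite_true, ite_false, add_zero, zero_add, eqc]
  simp only [idx0, idx0b, idx1, idx2, idx3, idx4, idx5, idx6, idx7, idx8, idx9, idx10, idx11, idx12, idx13, idx14]
  rcases Bool.eq_false_or_eq_true (D ⟨4, by omega⟩) with h0|h0 <;> rcases Bool.eq_false_or_eq_true (D ⟨5, by omega⟩) with h1|h1 <;> rcases Bool.eq_false_or_eq_true (D ⟨6, by omega⟩) with h2|h2 <;> rcases Bool.eq_false_or_eq_true (D ⟨7, by omega⟩) with h3|h3 <;> rcases Bool.eq_false_or_eq_true (D ⟨13, by omega⟩) with h4|h4 <;> simp only [h0, h1, h2, h3, h4] <;> decide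

set_option maxRecDepth 10000 in
lemma deg5 (D : Fin 15 → Bool) : ((W.outDeg D 5 - W.inDeg D 5 : ℤ) : ZMod 3) = 0 ↔
    ((cond (!D ⟨6, by omega⟩) 1 0 + cond (!D ⟨7, by omega⟩) 1 0 + cond (D ⟨8, by omega⟩) 1 0 + cond (D ⟨9, by omega⟩) 1 0 + cond (!D ⟨14, by omega⟩) 1 0 : ℕ)) % 3 = 1 := by
  simp only [outDeg, inDeg, Finset.card_filter]
  simp only [outDeg, inDeg, Finset.card_filter, Fin.sum_univ_succ, Fin.sum_univ_zero, tail, head,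
    W, Matrix.cons_val_zero, Matrix.cons_val_one, Matrix.head_cons, Matrix.cons_val_succ]
  simp only [apply_ite (fun x : Fin 6 => x = 0), apply_ite (fun x : Fin 6 => x = 1),
    apply_ite (fun x : Fin 6 => x = 2), apply_ite (fun x : Fin 6 => x = 3),
    apply_ite (fun x : Fin 6 => x = 4), apply_ite (fun x : Fin 6 => x = 5),
    Fin.reduceEq, iteTF, ite_self, ite_true, ite_false, add_zero, zero_add, eqc]
  simp only [idx0, idx0b, idx1, idx2, idx3, idx4, idx5, idx6, idx7, idx8, idx9, idx10, idx11, idx12, idx13, idx14]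
  rcases Bool.eq_false_or_eq_true (D ⟨6, by omega⟩) with h0|h0 <;> rcases Bool.eq_false_or_eq_true (D ⟨7, by omega⟩) with h1|h1 <;> rcases Bool.eq_false_or_eq_true (D ⟨8, by omega⟩) with h2|h2 <;> rcases Bool.eq_false_or_eq_true (D ⟨9, by omega⟩) with h3|h3 <;> rcases Bool.eq_false_or_eq_true (D ⟨14, by omega⟩) with h4|h4 <;> simp only [h0, h1, h2, h3, h4] <;> decide

lemma Wfst0 : W.fst ⟨0, by omega⟩ = ⟨1, by omega⟩ := rfl
lemma Wsnd0 : W.snd ⟨0, by omega⟩ = ⟨2, by omega⟩ := rfl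
lemma Wfst1 : W.fst ⟨1, by omega⟩ = ⟨1, by omega⟩ := rfl
lemma Wsnd1 : W.snd ⟨1, by omega⟩ = ⟨2, by omega⟩ := rfl
lemma Wfst2 : W.fst ⟨2, by omega⟩ = ⟨2, by omega⟩ := rfl
lemma Wsnd2 : W.snd ⟨2, by omega⟩ = ⟨3, by omega⟩ := rfl
lemma Wfst3 : W.fst ⟨3, by omega⟩ = ⟨2, by omega⟩ := rfl
lemma Wsnd3 : W.snd ⟨3, by omega⟩ = ⟨3, by omega⟩ := rfl
lemma Wfst4 : W.fst ⟨4, by omega⟩ = ⟨3, by omega⟩ := rfl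
lemma Wsnd4 : W.snd ⟨4, by omega⟩ = ⟨4, by omega⟩ := rfl
lemma Wfst5 : W.fst ⟨5, by omega⟩ = ⟨3, by omega⟩ := rfl
lemma Wsnd5 : W.snd ⟨5, by omega⟩ = ⟨4, by omega⟩ := rfl
lemma Wfst6 : W.fst ⟨6, by omega⟩ = ⟨4, by omega⟩ := rfl
lemma Wsnd6 : W.snd ⟨6, by omega⟩ = ⟨5, by omega⟩ := rfl
lemma Wfst7 : W.fst ⟨7, by omega⟩ = ⟨4, by omega⟩ := rfl
lemma Wsnd7 : W.snd ⟨7, by omega⟩ = ⟨5, by omega⟩ := rfl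
lemma Wfst8 : W.fst ⟨8, by omega⟩ = ⟨5, by omega⟩ := rfl
lemma Wsnd8 : W.snd ⟨8, by omega⟩ = ⟨1, by omega⟩ := rfl
lemma Wfst9 : W.fst ⟨9, by omega⟩ = ⟨5, by omega⟩ := rfl
lemma Wsnd9 : W.snd ⟨9, by omega⟩ = ⟨1, by omega⟩ := rfl
lemma Wfst10 : W.fst ⟨10, by omega⟩ = ⟨0, by omega⟩ := rfl
lemma Wsnd10 : W.snd ⟨10, by omega⟩ = ⟨1, by omega⟩ := rfl
lemma Wfst11 : W.fst ⟨11, by omega⟩ = ⟨0, by omega⟩ := rfl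
lemma Wsnd11 : W.snd ⟨11, by omega⟩ = ⟨2, by omega⟩ := rfl
lemma Wfst12 : W.fst ⟨12, by omega⟩ = ⟨0, by omega⟩ := rfl
lemma Wsnd12 : W.snd ⟨12, by omega⟩ = ⟨3, by omega⟩ := rfl
lemma Wfst13 : W.fst ⟨13, by omega⟩ = ⟨0, by omega⟩ := rfl
lemma Wsnd13 : W.snd ⟨13, by omega⟩ = ⟨4, by omega⟩ := rfl
lemma Wfst14 : W.fst ⟨14, by omega⟩ = ⟨0, by omega⟩ := rfl
lemma Wsnd14 : W.snd ⟨14, by omega⟩ = ⟨5, by omega⟩ := rfl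

set_option maxRecDepth 10000 in
lemma min1 (D : Fin 15 → Bool) : MinorEdgeAt W D ⟨1, by omega⟩ ⟨10, by omega⟩ ↔ (D ⟨0, by omega⟩ = D ⟨10, by omega⟩ ∧ D ⟨1, by omega⟩ = D ⟨10, by omega⟩ ∧ ¬(D ⟨8, by omega⟩ = D ⟨10, by omega⟩) ∧ ¬(D ⟨9, by omega⟩ = D ⟨10, by omega⟩)) := by
  simp only [MinorEdgeAt, Incident, head, Fin.forall_fin_succ, idx0, idx0b, idx1, idx2, idx3,
    idx4, idx5, idx6, idx7, idx8, idx9, idx10, idx11, idx12, idx13, idx14, Wfst0, Wsnd0, Wfst1, Wsnd1, Wfst2, Wsnd2, Wfst3, Wsnd3, Wfst4, Wsnd4, Wfst5, Wsnd5, Wfst6, Wsnd6, Wfst7, Wsnd7, Wfst8, Wsnd8, Wfst9, Wsnd9, Wfst10, Wsnd10, Wfst11, Wsnd11, Wfst12, Wsnd12, Wfst13, Wsnd13, Wfst14, Wsnd14]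
  simp only [Fin.mk.injEq, ne_eq, Nat.reduceEqDiff, OfNat.ofNat_ne_zero, OfNat.ofNat_ne_one,
    false_or, or_false, or_self, false_implies, true_implies, forall_const, IsEmpty.forall_iff,
    not_false_eq_true, true_and, and_true, if_true, if_false, ite_true, ite_false]
  rcases Bool.eq_false_or_eq_true (D ⟨0, by omega⟩) with h0|h0 <;> rcases Bool.eq_false_or_eq_true (D ⟨1, by omega⟩) with h1|h1 <;> rcases Bool.eq_false_or_eq_true (D ⟨8, by omega⟩) with h2|h2 <;> rcases Bool.eq_false_or_eq_true (D ⟨9, by omega⟩) with h3|h3 <;> rcases Bool.eq_false_or_eq_true (D ⟨10, by omega⟩) with h4|h4 <;> simp only [h0, h1, h2, h3, h4] <;> decide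

set_option maxRecDepth 10000 in
lemma min2 (D : Fin 15 → Bool) : MinorEdgeAt W D ⟨2, by omega⟩ ⟨11, by omega⟩ ↔ (D ⟨2, by omega⟩ = D ⟨11, by omega⟩ ∧ D ⟨3, by omega⟩ = D ⟨11, by omega⟩ ∧ ¬(D ⟨0, by omega⟩ = D ⟨11, by omega⟩) ∧ ¬(D ⟨1, by omega⟩ = D ⟨11, by omega⟩)) := by
  simp only [MinorEdgeAt, Incident, head, Fin.forall_fin_succ, idx0, idx0b, idx1, idx2, idx3,
    idx4, idx5, idx6, idx7, idx8, idx9, idx10, idx11, idx12, idx13, idx14, Wfst0, Wsnd0, Wfst1, Wsnd1, Wfst2, Wsnd2, Wfst3, Wsnd3, Wfst4, Wsnd4, Wfst5, Wsnd5, Wfst6, Wsnd6, Wfst7, Wsnd7, Wfst8, Wsnd8, Wfst9, Wsnd9, Wfst10, Wsnd10, Wfst11, Wsnd11, Wfst12, Wsnd12, Wfst13, Wsnd13, Wfst14, Wsnd14]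
  simp only [Fin.mk.injEq, ne_eq, Nat.reduceEqDiff, OfNat.ofNat_ne_zero, OfNat.ofNat_ne_one,
    false_or, or_false, or_self, false_implies, true_implies, forall_const, IsEmpty.forall_iff,
    not_false_eq_true, true_and, and_true, if_true, if_false, ite_true, ite_false]
  rcases Bool.eq_false_or_eq_true (D ⟨2, by omega⟩) with h0|h0 <;> rcases Bool.eq_false_or_eq_true (D ⟨3, by omega⟩) with h1|h1 <;> rcases Bool.eq_false_or_eq_true (D ⟨0, by omega⟩) with h2|h2 <;> rcases Bool.eq_false_or_eq_true (D ⟨1, by omega⟩) with h3|h3 <;> rcases Bool.eq_false_or_eq_true (D ⟨11, by omega⟩) with h4|h4 <;> simp only [h0, h1, h2, h3, h4] <;> decide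

set_option maxRecDepth 10000 in
lemma min3 (D : Fin 15 → Bool) : MinorEdgeAt W D ⟨3, by omega⟩ ⟨12, by omega⟩ ↔ (D ⟨4, by omega⟩ = D ⟨12, by omega⟩ ∧ D ⟨5, by omega⟩ = D ⟨12, by omega⟩ ∧ ¬(D ⟨2, by omega⟩ = D ⟨12, by omega⟩) ∧ ¬(D ⟨3, by omega⟩ = D ⟨12, by omega⟩)) := by
  simp only [MinorEdgeAt, Incident, head, Fin.forall_fin_succ, idx0, idx0b, idx1, idx2, idx3,
    idx4, idx5, idx6, idx7, idx8, idx9, idx10, idx11, idx12, idx13, idx14, Wfst0, Wsnd0, Wfst1, Wsnd1, Wfst2, Wsnd2, Wfst3, Wsnd3, Wfst4, Wsnd4, Wfst5, Wsnd5, Wfst6, Wsnd6, Wfst7, Wsnd7, Wfst8, Wsnd8, Wfst9, Wsnd9, Wfst10, Wsnd10, Wfst11, Wsnd11, Wfst12, Wsnd12, Wfst13, Wsnd13, Wfst14, Wsnd14]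
  simp only [Fin.mk.injEq, ne_eq, Nat.reduceEqDiff, OfNat.ofNat_ne_zero, OfNat.ofNat_ne_one,
    false_or, or_false, or_self, false_implies, true_implies, forall_const, IsEmpty.forall_iff,
    not_false_eq_true, true_and, and_true, if_true, if_false, ite_true, ite_false]
  rcases Bool.eq_false_or_eq_true (D ⟨4, by omega⟩) with h0|h0 <;> rcases Bool.eq_false_or_eq_true (D ⟨5, by omega⟩) with h1|h1 <;> rcases Bool.eq_false_or_eq_true (D ⟨2, by omega⟩) with h2|h2 <;> rcases Bool.eq_false_or_eq_true (D ⟨3, by omega⟩) with h3|h3 <;> rcases Bool.eq_false_or_eq_true (D ⟨12, by omega⟩) with h4|h4 <;> simp only [h0, h1, h2, h3, h4] <;> decide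

set_option maxRecDepth 10000 in
lemma min4 (D : Fin 15 → Bool) : MinorEdgeAt W D ⟨4, by omega⟩ ⟨13, by omega⟩ ↔ (D ⟨6, by omega⟩ = D ⟨13, by omega⟩ ∧ D ⟨7, by omega⟩ = D ⟨13, by omega⟩ ∧ ¬(D ⟨4, by omega⟩ = D ⟨13, by omega⟩) ∧ ¬(D ⟨5, by omega⟩ = D ⟨13, by omega⟩)) := by
  simp only [MinorEdgeAt, Incident, head, Fin.forall_fin_succ, idx0, idx0b, idx1, idx2, idx3,
    idx4, idx5, idx6, idx7, idx8, idx9, idx10, idx11, idx12, idx13, idx14, Wfst0, Wsnd0, Wfst1, Wsnd1, Wfst2, Wsnd2, Wfst3, Wsnd3, Wfst4, Wsnd4, Wfst5, Wsnd5, Wfst6, Wsnd6, Wfst7, Wsnd7, Wfst8, Wsnd8, Wfst9, Wsnd9, Wfst10, Wsnd10, Wfst11, Wsnd11, Wfst12, Wsnd12, Wfst13, Wsnd13, Wfst14, Wsnd14]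
  simp only [Fin.mk.injEq, ne_eq, Nat.reduceEqDiff, OfNat.ofNat_ne_zero, OfNat.ofNat_ne_one,
    false_or, or_false, or_self, false_implies, true_implies, forall_const, IsEmpty.forall_iff,
    not_false_eq_true, true_and, and_true, if_true, if_false, ite_true, ite_false]
  rcases Bool.eq_false_or_eq_true (D ⟨6, by omega⟩) with h0|h0 <;> rcases Bool.eq_false_or_eq_true (D ⟨7, by omega⟩) with h1|h1 <;> rcases Bool.eq_false_or_eq_true (D ⟨4, by omega⟩) with h2|h2 <;> rcases Bool.eq_false_or_eq_true (D ⟨5, by omega⟩) with h3|h3 <;> rcases Bool.eq_false_or_eq_true (D ⟨13, by omega⟩) with h4|h4 <;> simp only [h0, h1, h2, h3, h4] <;> decide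

set_option maxRecDepth 10000 in
lemma min5 (D : Fin 15 → Bool) : MinorEdgeAt W D ⟨5, by omega⟩ ⟨14, by omega⟩ ↔ (D ⟨8, by omega⟩ = D ⟨14, by omega⟩ ∧ D ⟨9, by omega⟩ = D ⟨14, by omega⟩ ∧ ¬(D ⟨6, by omega⟩ = D ⟨14, by omega⟩) ∧ ¬(D ⟨7, by omega⟩ = D ⟨14, by omega⟩)) := by
  simp only [MinorEdgeAt, Incident, head, Fin.forall_fin_succ, idx0, idx0b, idx1, idx2, idx3,
    idx4, idx5, idx6, idx7, idx8, idx9, idx10, idx11, idx12, idx13, idx14, Wfst0, Wsnd0, Wfst1, Wsnd1, Wfst2, Wsnd2, Wfst3, Wsnd3, Wfst4, Wsnd4, Wfst5, Wsnd5, Wfst6, Wsnd6, Wfst7, Wsnd7, Wfst8, Wsnd8, Wfst9, Wsnd9, Wfst10, Wsnd10, Wfst11, Wsnd11, Wfst12, Wsnd12, Wfst13, Wsnd13, Wfst14, Wsnd14]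
  simp only [Fin.mk.injEq, ne_eq, Nat.reduceEqDiff, OfNat.ofNat_ne_zero, OfNat.ofNat_ne_one,
    false_or, or_false, or_self, false_implies, true_implies, forall_const, IsEmpty.forall_iff,
    not_false_eq_true, true_and, and_true, if_true, if_false, ite_true, ite_false]
  rcases Bool.eq_false_or_eq_true (D ⟨8, by omega⟩) with h0|h0 <;> rcases Bool.eq_false_or_eq_true (D ⟨9, by omega⟩) with h1|h1 <;> rcases Bool.eq_false_or_eq_true (D ⟨6, by omega⟩) with h2|h2 <;> rcases Bool.eq_false_or_eq_true (D ⟨7, by omega⟩) with h3|h3 <;> rcases Bool.eq_false_or_eq_true (D ⟨14, by omega⟩) with h4|h4 <;> simp only [h0, h1, h2, h3, h4] <;> decide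

set_option maxRecDepth 10000 in
set_option maxHeartbeats 4000000 in
set_option synthInstance.maxHeartbeats 4000000 in
set_option synthInstance.maxSize 5000 in
lemma combo : ∀ b0 b1 b2 b3 b4 b5 b6 b7 b8 b9 b10 b11 b12 b13 b14 : Bool, ((cond b10 1 0 + cond b11 1 0 + cond b12 1 0 + cond b13 1 0 + cond b14 1 0 : ℕ)) % 3 = 1 → ((cond b0 1 0 + cond b1 1 0 + cond (!b8) 1 0 + cond (!b9) 1 0 + cond (!b10) 1 0 : ℕ)) % 3 = 1 → ((cond (!b0) 1 0 + cond (!b1) 1 0 + cond b2 1 0 + cond b3 1 0 + cond (!b11) 1 0 : ℕ)) % 3 = 1 → ((cond (!b2) 1 0 + cond (!b3) 1 0 + cond b4 1 0 + cond b5 1 0 + cond (!b12) 1 0 : ℕ)) % 3 = 1 → ((cond (!b4) 1 0 + cond (!b5) 1 0 + cond b6 1 0 + cond b7 1 0 + cond (!b13) 1 0 : ℕ)) % 3 = 1 → ((cond (!b6) 1 0 + cond (!b7) 1 0 + cond b8 1 0 + cond b9 1 0 + cond (!b14) 1 0 : ℕ)) % 3 = 1 → ((b0 = b10 ∧ b1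 = b10 ∧ ¬(b8 = b10) ∧ ¬(b9 = b10)) ∨ (b2 = b11 ∧ b3 = b11 ∧ ¬(b0 = b11) ∧ ¬(b1 = b11)) ∨ (b4 = b12 ∧ b5 = b12 ∧ ¬(b2 = b12) ∧ ¬(b3 = b12)) ∨ (b6 = b13 ∧ b7 = b13 ∧ ¬(b4 = b13) ∧ ¬(b5 = b13)) ∨ (b8 = b14 ∧ b9 = b14 ∧ ¬(b6 = b14) ∧ ¬(b7 = b14))) := by decide

/-- In any mod 3-orientation `D` of `W` there is some `k` with `1 ≤ k ≤ 5`
such that the spoke `v₀vₖ` is the minor-edge at `vₖ`. -/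
theorem stmt_1 (D : Fin 15 → Bool) (hD : W.IsMod3Orientation D) :
    ∃ i : Fin 5,
      MinorEdgeAt W D ⟨i.1 + 1, by have := i.isLt; omega⟩
        ⟨10 + i.1, by have := i.isLt; omega⟩ := by
  have c0 := (deg0 D).mp (hD 0)
  have c1 := (deg1 D).mp (hD 1)
  have c2 := (deg2 D).mp (hD 2)
  have c3 := (deg3 D).mp (hD 3)
  have c4 := (deg4 D).mp (hD 4)
  have c5 := (deg5 D).mp (hD 5)
  have h := combo (D ⟨0, by omega⟩) (D ⟨1, by omega⟩) (D ⟨2, by omega⟩) (D ⟨3, by omega⟩) (D ⟨4, by omega⟩) (D ⟨5, by omega⟩) (D ⟨6, by omega⟩) (D ⟨7, by omega⟩) (D ⟨8, by omega⟩) (D ⟨9, by omega⟩) (D ⟨10, by omega⟩) (D ⟨11, by omega⟩) (D ⟨12, by omega⟩) (D ⟨13, by omega⟩) (D ⟨14, by omega⟩) c0 c1 c2 c3 c4 c5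
  rcases h with m|m|m|m|m
  · exact ⟨⟨0, by omega⟩, (min1 D).mpr m⟩
  · exact ⟨⟨1, by omega⟩, (min2 D).mpr m⟩
  · exact ⟨⟨2, by omega⟩, (min3 D).mpr m⟩
  · exact ⟨⟨3, by omega⟩, (min4 D).mpr m⟩
  · exact ⟨⟨4, by omega⟩, (min5 D).mpr m⟩


end Multigraph
end

section
/- Let W be the graph on vertices v_0, v_1, ..., v_5 where v_1 v_2 v_3 v_4 v_5 form a cycle with every cycle edge doubled, and v_0 is joined to each v_i by a single edge. Let β assign value 1 in Z_3 to every vertex. Then for any orientation D of W with d^+_D(v) - d^-_D(v) ≡ 1 (mod 3) for every vertex v, there exists a vertex v_j with outdegree 0 and indegree 5. -/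
open Finset

namespace Multigraph

variable {V E : Type} [Fintype V] [DecidableEq V] [Fintype E] [DecidableEq E]

lemma sum_outDeg (G : Multigraph V E) (D : E → Bool) :
    ∑ v, G.outDeg D v = (Fintype.card E : ℤ) := by
  unfold outDeg
  rw [← Nat.cast_sum]
  congr 1
  exact (Finset.card_eq_sum_card_fiberwise (f := G.tail D) (fun x _ => Finset.mem_univ _)).symm

lemma sum_inDeg (G : Multigraph V E) (D : E → Bool) :
    ∑ v, G.inDeg D v = (Fintype.card E : ℤ) := by
  unfold inDeg
  rw [← Nat.cast_sum]
  congr 1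
  exact (Finset.card_eq_sum_card_fiberwise (f := G.head D) (fun x _ => Finset.mem_univ _)).symm

lemma outDeg_add_inDeg (G : Multigraph V E) (D : E → Bool) (v : V) :
    G.outDeg D v + G.inDeg D v = (G.degree v : ℤ) := by
  unfold outDeg inDeg degree
  rw [← Nat.cast_add]
  congr 1
  have hdisj : Disjoint (univ.filter fun e => G.tail D e = v)
      (univ.filter fun e => G.head D e = v) := by
    rw [Finset.disjoint_left]
    intro e he1 he2
    simp only [Finset.mem_filter] at he1 he2
    apply G.no_loop e
    unfold tail at he1
    unfold head at he2
    by_cases h : D e <;> simp [h] at he1 he2 <;> rw [he1, he2]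
  rw [← Finset.card_union_of_disjoint hdisj, ← Finset.filter_or]
  congr 1
  apply Finset.filter_congr
  intro e _
  unfold tail head Incident
  by_cases h : D e <;> simp [h] <;> tauto

/-- For the all-ones boundary `β ≡ 1` on `W`, any `β`-orientation has a vertex
of outdegree `0` and indegree `5`. -/
theorem stmt_2 (D : Fin 15 → Bool)
    (hD : W.IsBetaOrientation (fun _ => 1) D) :
    ∃ j : Fin 6, W.outDeg D j = 0 ∧ W.inDeg D j = 5 := by
  by_contra hcon
  push_neg at hcon
  have hdeg : ∀ v : Fin 6, W.degree v = 5 := by decide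
  have hv : ∀ v : Fin 6, W.outDeg D v - W.inDeg D v = 1 := by
    intro v
    have h1 : W.outDeg D v + W.inDeg D v = 5 := by
      rw [outDeg_add_inDeg, hdeg]; norm_num
    have h2 := hD v
    have h3 : (0 : ℤ) ≤ W.outDeg D v := Int.natCast_nonneg _
    have h4 : (0 : ℤ) ≤ W.inDeg D v := Int.natCast_nonneg _
    have h5 : ¬(W.outDeg D v = 0 ∧ W.inDeg D v = 5) := by
      intro h
      have hc : W.outDeg D v = 0 → ¬W.inDeg D v = 5 := by simpa using hcon v
      exact hc h.1 h.2
    have h6 : (W.outDeg D v - W.inDeg D v) % 3 = 1 % 3 := by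
      have : ((W.outDeg D v - W.inDeg D v : ℤ) : ZMod 3) = ((1 : ℤ) : ZMod 3) := by
        simpa using h2
      exact (ZMod.intCast_eq_intCast_iff' _ _ _).mp this
    omega
  have hsum : ∑ v : Fin 6, (W.outDeg D v - W.inDeg D v) = 0 := by
    rw [Finset.sum_sub_distrib, sum_outDeg, sum_inDeg, sub_self]
  rw [Finset.sum_congr rfl (fun v _ => hv v)] at hsum
  simp at hsum

end Multigraph
end

section
/- Let G be a k-edge-connected graph and let A_1, ..., A_t be distinct vertex subsets such that each A_i is a k-critical-set (that is, d(A_i) ≤ k but d(B) > k for every nonempty proper subset B of A_i). Then A_i and A_j are disjoint for all i ≠ j. -/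
open Finset

namespace Multigraph

variable {V E : Type} [Fintype V] [DecidableEq V] [Fintype E] [DecidableEq E]

lemma cut_sdiff_submodular (G : Multigraph V E) (A B : Finset V) :
    (G.cut (A \ B)).card + (G.cut (B \ A)).card ≤ (G.cut A).card + (G.cut B).card := by
  simp only [cut, Finset.card_filter]
  rw [← Finset.sum_add_distrib, ← Finset.sum_add_distrib]
  apply Finset.sum_le_sum
  intro e _
  by_cases hA1 : G.fst e ∈ A <;> by_cases hA2 : G.snd e ∈ A <;>
    by_cases hB1 : G.fst e ∈ B <;> by_cases hB2 : G.snd e ∈ B <;>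
    simp [hA1, hA2, hB1, hB2]

/-- Distinct `k`-critical-sets of a `k`-edge-connected graph are disjoint. -/
theorem stmt_5 {V E : Type} [Fintype V] [DecidableEq V] [Fintype E] [DecidableEq E] (G : Multigraph V E) (k : ℕ)
    (hG : G.EdgeConnected k) {A₁ A₂ : Finset V}
    (h1 : G.CriticalSet k A₁) (h2 : G.CriticalSet k A₂) (hne : A₁ ≠ A₂) :
    Disjoint A₁ A₂ := by
  obtain ⟨hne1, hnu1, hle1, hcrit1⟩ := h1
  obtain ⟨hne2, hnu2, hle2, hcrit2⟩ := h2
  by_contra hdis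
  obtain ⟨x, hx1, hx2⟩ := Finset.not_disjoint_iff.mp hdis
  by_cases hsub12 : A₁ ⊆ A₂
  · exact absurd hle1 (not_le.mpr (hcrit2 A₁ hne1 ⟨hsub12, fun h => hne (le_antisymm hsub12 h)⟩))
  by_cases hsub21 : A₂ ⊆ A₁
  · exact absurd hle2 (not_le.mpr (hcrit1 A₂ hne2
      ⟨hsub21, fun h => hne (le_antisymm h hsub21)⟩))
  have hd1 : k < (G.cut (A₁ \ A₂)).card := by
    apply hcrit1 _ (by rwa [Finset.sdiff_nonempty])
    refine ⟨Finset.sdiff_subset, fun h => ?_⟩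
    have := h hx1
    simp [hx2] at this
  have hd2 : k < (G.cut (A₂ \ A₁)).card := by
    apply hcrit2 _ (by rwa [Finset.sdiff_nonempty])
    refine ⟨Finset.sdiff_subset, fun h => ?_⟩
    have := h hx2
    simp [hx1] at this
  have := cut_sdiff_submodular G A₁ A₂
  omega

end Multigraph
end

section
/- Let G be a k-edge-connected graph and let A_1, ..., A_t be all distinct k-critical-sets of G. Construct G' from G by adding a new vertex x joined by one new edge to a vertex in each A_i (i = 1, ..., t). Then every edge-cut of G' other than ∂_{G'}(x) has size at least k+1. -/
open Finset

namespace Multigraph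

variable {V E : Type} [Fintype V] [DecidableEq V] [Fintype E] [DecidableEq E]

/-- Add a new vertex (`none`) to `G`, joined by one new edge to `r i` for each
`i : Fin t`. -/
def addVertex (G : Multigraph V E) {t : ℕ} (r : Fin t → V) :
    Multigraph (Option V) (E ⊕ Fin t) where
  fst := Sum.elim (fun e => some (G.fst e)) fun _ => none
  snd := Sum.elim (fun e => some (G.snd e)) fun i => some (r i)
  no_loop := by
    rintro (e | i) h
    · exact G.no_loop e (Option.some_injective V h)
    · simp at h

lemma cut_compl' {V E : Type} [Fintype V] [DecidableEq V] [Fintype E] [DecidableEq E]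
    (G : Multigraph V E) (A : Finset V) : G.cut Aᶜ = G.cut A := by
  unfold cut
  apply filter_congr
  intro e _
  simp only [Finset.mem_compl]
  constructor <;> (intro h h'; apply h; tauto)

lemma card_filter_sum' {α β : Type} [Fintype α] [Fintype β] (P : α ⊕ β → Prop) [DecidablePred P] :
    (univ.filter P).card =
      (univ.filter fun a => P (Sum.inl a)).card + (univ.filter fun b => P (Sum.inr b)).card := by
  rw [Finset.card_filter, Finset.card_filter, Finset.card_filter, Fintype.sum_sum_type]

lemma exists_critical_subset {V E : Type} [Fintype V] [DecidableEq V] [Fintype E] [DecidableEq E]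
    (G : Multigraph V E) (k : ℕ) :
    ∀ B : Finset V, B.Nonempty → B ≠ univ → (G.cut B).card ≤ k →
      ∃ A', A' ⊆ B ∧ G.CriticalSet k A' := by
  intro B
  induction B using Finset.strongInductionOn with
  | _ B ih =>
    intro hne hnu hd
    by_cases h : ∀ B' : Finset V, B'.Nonempty → B' ⊂ B → k < (G.cut B').card
    · exact ⟨B, subset_rfl, hne, hnu, hd, h⟩
    · push_neg at h
      obtain ⟨B', hB'ne, hB'sub, hB'd⟩ := h
      obtain ⟨A', hA'sub, hA'⟩ :=
        ih B' hB'sub hB'ne (hB'sub.trans_subset (subset_univ B)).ne hB'd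
      exact ⟨A', hA'sub.trans hB'sub.subset, hA'⟩

lemma stmt_8_aux {V E : Type} [Fintype V] [DecidableEq V] [Fintype E] [DecidableEq E]
    (G : Multigraph V E) (k t : ℕ)
    (hG : G.EdgeConnected k) (A : Fin t → Finset V)
    (hall : ∀ B : Finset V, G.CriticalSet k B ↔ ∃ i, B = A i)
    (r : Fin t → V) (hr : ∀ i, r i ∈ A i)
    (C : Finset (Option V)) (hC : C.Nonempty) (hCn : none ∉ C)
    (hCne : (G.addVertex r).cut C ≠ (G.addVertex r).cut {none}) :
    k + 1 ≤ ((G.addVertex r).cut C).card := by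
  classical
  set B : Finset V := univ.filter (fun v => some v ∈ C) with hBdef
  have hmemB : ∀ v : V, v ∈ B ↔ some v ∈ C := by
    intro v; simp [hBdef]
  -- decompose the cut
  have hcard : ((G.addVertex r).cut C).card =
      (G.cut B).card + (univ.filter fun i : Fin t => r i ∈ B).card := by
    unfold Multigraph.cut
    rw [card_filter_sum']
    congr 1
    · apply Finset.card_bij (fun e _ => e) <;>
        simp only [Finset.mem_filter, Finset.mem_univ, true_and]
      · intro e he
        simpa [Multigraph.addVertex, hmemB] using he
      · intro e e' _ _ h; exact h
      · intro e he
        refine ⟨e, ?_, rfl⟩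
        simpa [Multigraph.addVertex, hmemB] using he
    · apply Finset.card_bij (fun i _ => i) <;>
        simp only [Finset.mem_filter, Finset.mem_univ, true_and]
      · intro i hi
        simp only [Multigraph.addVertex] at hi
        simp only [Sum.elim_inr] at hi
        rw [hmemB]
        tauto
      · intro i i' _ _ h; exact h
      · intro i hi
        refine ⟨i, ?_, rfl⟩
        simp only [Multigraph.addVertex, Sum.elim_inr]
        rw [hmemB] at hi
        tauto
  -- B is nonempty
  have hBne : B.Nonempty := by
    obtain ⟨x, hx⟩ := hC
    match x with
    | none => exact absurd hx hCn
    | some v => exact ⟨v, (hmemB v).mpr hx⟩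
  -- B ≠ univ
  have hBnu : B ≠ univ := by
    intro h
    apply hCne
    have : Cᶜ = ({none} : Finset (Option V)) := by
      ext x
      match x with
      | none => simp [hCn]
      | some v =>
        have : some v ∈ C := (hmemB v).mp (h ▸ mem_univ v)
        simp [this]
    calc (G.addVertex r).cut C = (G.addVertex r).cut Cᶜ := (cut_compl' _ _).symm
      _ = (G.addVertex r).cut {none} := by rw [this]
  have hdB : k ≤ (G.cut B).card := hG B hBne hBnu
  rw [hcard]
  by_cases hcase : (G.cut B).card ≤ k
  · obtain ⟨A', hA'sub, hA'crit⟩ := exists_critical_subset G k B hBne hBnu hcase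
    obtain ⟨i, hi⟩ := (hall A').mp hA'crit
    have : r i ∈ B := hA'sub (hi ▸ hr i)
    have hpos : 0 < (univ.filter fun i : Fin t => r i ∈ B).card :=
      Finset.card_pos.mpr ⟨i, by simp [this]⟩
    omega
  · omega

/-- Let `A 0, …, A (t-1)` be all the distinct `k`-critical-sets of a
`k`-edge-connected graph `G`, and form `G'` by adding a new vertex `x` joined
by one new edge to a vertex `r i ∈ A i` for each `i`.  Then every edge-cut of
`G'` other than `∂(x)` has at least `k + 1` edges. -/
theorem stmt_8 {V E : Type} [Fintype V] [DecidableEq V] [Fintype E] [DecidableEq E] (G : Multigraph V E) (k t : ℕ)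
    (hG : G.EdgeConnected k) (A : Fin t → Finset V)
    (hinj : Function.Injective A)
    (hall : ∀ B : Finset V, G.CriticalSet k B ↔ ∃ i, B = A i)
    (r : Fin t → V) (hr : ∀ i, r i ∈ A i) :
    ∀ C : Finset (Option V), C.Nonempty → C ≠ univ →
      (G.addVertex r).cut C ≠ (G.addVertex r).cut {none} →
      k + 1 ≤ ((G.addVertex r).cut C).card := by
  intro C hCne hCnu hCcut
  by_cases hn : none ∈ C
  · have h1 : (G.addVertex r).cut C = (G.addVertex r).cut Cᶜ := (cut_compl' _ _).symm
    rw [h1]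
    apply stmt_8_aux G k t hG A hall r hr Cᶜ
    · rw [Finset.nonempty_iff_ne_empty]
      intro h
      exact hCnu (by rwa [Finset.compl_eq_empty_iff] at h)
    · simp [hn]
    · rwa [← h1]
  · exact stmt_8_aux G k t hG A hall r hr C hCne hn hCcut

end Multigraph
end

section
/- A graph G with a vertex x is Z_3-extendable at x if and only if G − x is Z_3-connected. -/
open Finset

namespace Multigraph

variable {V E : Type} [Fintype V] [DecidableEq V] [Fintype E] [DecidableEq E]

/-- The graph `G - x`: delete the vertex `x` and all incident edges. -/
def deleteVertex (G : Multigraph V E) (x : V) :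
    Multigraph {v : V // v ≠ x} {e : E // ¬ G.Incident x e} where
  fst e := ⟨G.fst e.1, fun h => e.2 (Or.inl h)⟩
  snd e := ⟨G.snd e.1, fun h => e.2 (Or.inr h)⟩
  no_loop e h := G.no_loop e.1 (congrArg Subtype.val h)

/-- Auxiliary: contribution of edge `e` to `d⁺(v) - d⁻(v)` under orientation `D`. -/
def chi (G : Multigraph V E) (D : E → Bool) (v : V) (e : E) : ℤ :=
  (if G.tail D e = v then 1 else 0) - (if G.head D e = v then 1 else 0)

lemma diff_eq_sum_chi (G : Multigraph V E) (D : E → Bool) (v : V) :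
    G.outDeg D v - G.inDeg D v = ∑ e, G.chi D v e := by
  unfold outDeg inDeg chi
  rw [Finset.sum_sub_distrib, Finset.card_filter, Finset.card_filter]
  push_cast
  rfl

lemma sum_chi_v (G : Multigraph V E) (D : E → Bool) (e : E) :
    ∑ v, G.chi D v e = 0 := by
  unfold chi
  rw [Finset.sum_sub_distrib]
  simp [Finset.sum_ite_eq]

lemma chi_of_not_incident (G : Multigraph V E) (D : E → Bool) {x : V} {e : E}
    (he : ¬ G.Incident x e) : G.chi D x e = 0 := by
  have h1 : G.tail D e ≠ x := by
    unfold tail; split <;> intro h <;> exact he (by simp [Incident, h])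
  have h2 : G.head D e ≠ x := by
    unfold head; split <;> intro h <;> exact he (by simp [Incident, h])
  simp [chi, h1, h2]

lemma chi_congr (G : Multigraph V E) {D D' : E → Bool} (v : V) (e : E)
    (h : D e = D' e) : G.chi D v e = G.chi D' v e := by
  unfold chi tail head; rw [h]

/-- The incident-part of the difference at `x` is the whole difference. -/
lemma diff_eq_incident_sum (G : Multigraph V E) (D : E → Bool) (x : V) :
    G.outDeg D x - G.inDeg D x
      = ∑ e ∈ univ.filter (fun e => G.Incident x e), G.chi D x e := by
  rw [diff_eq_sum_chi, ← Finset.sum_filter_add_sum_filter_not univ (fun e => G.Incident x e)]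
  have : ∑ e ∈ univ.filter (fun e => ¬ G.Incident x e), G.chi D x e = 0 := by
    apply Finset.sum_eq_zero
    intro e he
    exact G.chi_of_not_incident D (Finset.mem_filter.mp he).2
  rw [this, add_zero]

/-- Difference in `G - x` as a sum over non-incident edges of `G`. -/
lemma deleteVertex_diff (G : Multigraph V E) (x : V) (D : E → Bool) (v : V) (hv : v ≠ x) :
    (G.deleteVertex x).outDeg (fun e => D e.1) ⟨v, hv⟩
      - (G.deleteVertex x).inDeg (fun e => D e.1) ⟨v, hv⟩
      = ∑ e ∈ univ.filter (fun e => ¬ G.Incident x e), G.chi D v e := by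
  rw [diff_eq_sum_chi]
  have hterm : ∀ e : {e // ¬ G.Incident x e},
      (G.deleteVertex x).chi (fun e => D e.1) ⟨v, hv⟩ e = G.chi D v e.1 := by
    intro e
    simp only [chi, deleteVertex, tail, head]
    by_cases hD : D e.1 <;> simp [hD, Subtype.ext_iff]
  rw [Finset.sum_congr rfl (fun e _ => hterm e)]
  exact Finset.sum_subtype (univ.filter fun e => ¬ G.Incident x e)
      (p := fun e => ¬ G.Incident x e) (fun e => by simp) (fun e => G.chi D v e) |>.symm

/-- `G` is `ℤ₃`-extendable at `x` if and only if `G - x` is `ℤ₃`-connected. -/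
theorem stmt_9 {V E : Type} [Fintype V] [DecidableEq V] [Fintype E] [DecidableEq E] (G : Multigraph V E) (x : V) :
    G.Z3ExtendableAt x ↔ (G.deleteVertex x).Z3Connected := by
  classical
  constructor
  · -- extendable → G - x is Z₃-connected
    intro h β' hβ'
    set D₀ : E → Bool := fun _ => true with hD₀def
    set c : V → ZMod 3 := fun v =>
      ((∑ e ∈ univ.filter (fun e => G.Incident x e), G.chi D₀ v e : ℤ) : ZMod 3) with hc
    set β'ext : V → ZMod 3 := fun v => if hv : v = x then 0 else β' ⟨v, hv⟩ with hext
    set β : V → ZMod 3 := fun v => β'ext v + c v with hβdef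
    have hsumc : ∑ v, c v = 0 := by
      rw [hc]
      rw [← Int.cast_sum]
      rw [Finset.sum_comm]
      have : ∀ e ∈ univ.filter (fun e => G.Incident x e), ∑ v, G.chi D₀ v e = 0 :=
        fun e _ => G.sum_chi_v D₀ e
      rw [Finset.sum_congr rfl this]
      simp
    have hsumext : ∑ v, β'ext v = 0 := by
      rw [← Finset.add_sum_erase univ β'ext (Finset.mem_univ x)]
      have hx : β'ext x = 0 := by rw [hext]; simp
      have h1 : ∑ v ∈ univ.erase x, β'ext v = ∑ v : {v // v ≠ x}, β' v := by
        rw [Finset.sum_subtype (univ.erase x) (p := fun v => v ≠ x) (fun v => by simp) β'ext]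
        apply Finset.sum_congr rfl
        intro v _
        rw [hext]
        simp only [dif_neg v.2]
      rw [hx, h1, hβ', zero_add]
    have hbd : IsBoundary β := by
      unfold IsBoundary
      rw [hβdef]
      simp only []
      rw [Finset.sum_add_distrib, hsumc, hsumext, add_zero]
    have hβx : β x = c x := by rw [hβdef, hext]; simp
    have hcond : ((G.outDeg D₀ x - G.inDeg D₀ x : ℤ) : ZMod 3) = β x := by
      rw [hβx, hc, G.diff_eq_incident_sum D₀ x]
    obtain ⟨D, hag, hD⟩ := h β hbd D₀ hcond
    refine ⟨fun e => D e.1, ?_⟩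
    rintro ⟨v, hv⟩
    have key := G.deleteVertex_diff x D v hv
    rw [key]
    have hinc : ∑ e ∈ univ.filter (fun e => G.Incident x e), G.chi D v e
        = ∑ e ∈ univ.filter (fun e => G.Incident x e), G.chi D₀ v e := by
      refine Finset.sum_congr rfl fun e he => ?_
      exact G.chi_congr v e (hag e (Finset.mem_filter.mp he).2)
    have split : (∑ e ∈ univ.filter (fun e => ¬ G.Incident x e), G.chi D v e)
        = (∑ e, G.chi D v e)
          - ∑ e ∈ univ.filter (fun e => G.Incident x e), G.chi D₀ v e := by
      rw [← hinc, ← Finset.sum_filter_add_sum_filter_not univ (fun e => G.Incident x e)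
        (G.chi D v)]
      ring
    have hdiff := hD v
    rw [G.diff_eq_sum_chi] at hdiff
    rw [split, Int.cast_sub, hdiff]
    have hcv : ((∑ e ∈ univ.filter (fun e => G.Incident x e), G.chi D₀ v e : ℤ) : ZMod 3)
        = c v := rfl
    rw [hcv]
    have hβv : β v = β' ⟨v, hv⟩ + c v := by
      rw [hβdef]; simp only []; rw [hext]; simp only [dif_neg hv]
    rw [hβv]; ring
  · -- G - x is Z₃-connected → extendable
    intro h β hβ D₀ hD₀
    set β' : {v // v ≠ x} → ZMod 3 := fun v =>
      β v.1 - ((∑ e ∈ univ.filter (fun e => G.Incident x e), G.chi D₀ v.1 e : ℤ) : ZMod 3)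
      with hβ'def
    have hbd' : IsBoundary β' := by
      unfold IsBoundary
      rw [hβ'def]
      simp only []
      rw [Finset.sum_sub_distrib]
      have h1 : ∑ v : {v // v ≠ x}, β v.1 = - β x := by
        have := Finset.add_sum_erase univ β (Finset.mem_univ x)
        have h2 : ∑ v ∈ univ.erase x, β v = ∑ v : {v // v ≠ x}, β v.1 := by
          rw [Finset.sum_subtype (univ.erase x) (p := fun v => v ≠ x) (fun v => by simp)
            (fun v => β v)]
        rw [← h2]
        have := Finset.add_sum_erase univ β (Finset.mem_univ x)
        rw [hβ] at this
        linear_combination this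
      have h2 : ∑ v : {v // v ≠ x},
          ((∑ e ∈ univ.filter (fun e => G.Incident x e), G.chi D₀ v.1 e : ℤ) : ZMod 3)
          = - β x := by
        have h3 : ∑ v ∈ univ.erase x,
            ((∑ e ∈ univ.filter (fun e => G.Incident x e), G.chi D₀ v e : ℤ) : ZMod 3)
            = ∑ v : {v // v ≠ x},
              ((∑ e ∈ univ.filter (fun e => G.Incident x e), G.chi D₀ v.1 e : ℤ) : ZMod 3) := by
          rw [Finset.sum_subtype (univ.erase x) (p := fun v => v ≠ x) (fun v => by simp)]
        rw [← h3]
        have h4 : ∑ v, ((∑ e ∈ univ.filter (fun e => G.Incident x e), G.chi D₀ v e : ℤ)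
            : ZMod 3) = 0 := by
          rw [← Int.cast_sum, Finset.sum_comm]
          have : ∀ e ∈ univ.filter (fun e => G.Incident x e), ∑ v, G.chi D₀ v e = 0 :=
            fun e _ => G.sum_chi_v D₀ e
          rw [Finset.sum_congr rfl this]
          simp
        have h5 := Finset.add_sum_erase univ
          (fun v => ((∑ e ∈ univ.filter (fun e => G.Incident x e), G.chi D₀ v e : ℤ)
            : ZMod 3)) (Finset.mem_univ x)
        rw [h4] at h5
        have h6 : ((∑ e ∈ univ.filter (fun e => G.Incident x e), G.chi D₀ x e : ℤ)
            : ZMod 3) = β x := by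
          rw [← G.diff_eq_incident_sum D₀ x, hD₀]
        rw [h6] at h5
        linear_combination h5
      rw [h1, h2]
      ring
    obtain ⟨D', hD'⟩ := h β' hbd'
    refine ⟨fun e => if he : G.Incident x e then D₀ e else D' ⟨e, he⟩,
      fun e he => dif_pos he, ?_⟩
    set D : E → Bool := fun e => if he : G.Incident x e then D₀ e else D' ⟨e, he⟩ with hDdef
    have hagree : ∀ e, G.Incident x e → D e = D₀ e := fun e he => dif_pos he
    have hrest : (fun e : {e // ¬ G.Incident x e} => D e.1) = D' := by
      funext e
      show (if he : G.Incident x e.1 then D₀ e.1 else D' ⟨e.1, he⟩) = D' e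
      rw [dif_neg e.2]
    intro v
    rw [G.diff_eq_sum_chi,
      ← Finset.sum_filter_add_sum_filter_not univ (fun e => G.Incident x e) (G.chi D v)]
    have hinc : ∑ e ∈ univ.filter (fun e => G.Incident x e), G.chi D v e
        = ∑ e ∈ univ.filter (fun e => G.Incident x e), G.chi D₀ v e := by
      refine Finset.sum_congr rfl fun e he => ?_
      exact G.chi_congr v e (hagree e (Finset.mem_filter.mp he).2)
    by_cases hv : v = x
    · subst hv
      have hzero : ∑ e ∈ univ.filter (fun e => ¬ G.Incident v e), G.chi D v e = 0 :=
        Finset.sum_eq_zero fun e he => G.chi_of_not_incident D (Finset.mem_filter.mp he).2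
      rw [hzero, add_zero, hinc, ← G.diff_eq_incident_sum D₀ v, hD₀]
    · have key := G.deleteVertex_diff x D v hv
      rw [hrest] at key
      rw [hinc, ← key, Int.cast_add, hD' ⟨v, hv⟩]
      have hb : β' ⟨v, hv⟩
          = β v - ((∑ e ∈ univ.filter (fun e => G.Incident x e), G.chi D₀ v e : ℤ)
            : ZMod 3) := rfl
      rw [hb]
      ring

end Multigraph
end

section
/- Suppose every 5-edge-connected graph is Z_3-extendable at every vertex of degree 5. Then every 4-edge-connected graph with at most five edge-cuts of size 4 is Z_3-connected. -/
open Finset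

namespace Multigraph

variable {V E : Type} [Fintype V] [DecidableEq V] [Fintype E] [DecidableEq E]

section Aux
set_option linter.unusedSectionVars false
variable (G : Multigraph V E)

lemma cut_card_eq_sum (A : Finset V) :
    (G.cut A).card = ∑ e : E, (if ¬ ((G.fst e ∈ A) ↔ (G.snd e ∈ A)) then 1 else 0) := by
  classical
  simp [cut, Finset.card_filter]

lemma cut_compl (A : Finset V) : G.cut Aᶜ = G.cut A := by
  ext e; simp [cut]; tauto

lemma posimod (A B : Finset V) :
    (G.cut (A \ B)).card + (G.cut (B \ A)).card ≤ (G.cut A).card + (G.cut B).card := by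
  classical
  simp only [cut_card_eq_sum, ← Finset.sum_add_distrib]
  apply Finset.sum_le_sum
  intro e _
  by_cases h1 : G.fst e ∈ A <;> by_cases h2 : G.fst e ∈ B <;>
    by_cases h3 : G.snd e ∈ A <;> by_cases h4 : G.snd e ∈ B <;>
    simp [h1, h2, h3, h4]

lemma cut_eq_or (h4 : G.EdgeConnected 4) {A B : Finset V}
    (h : G.cut A = G.cut B) : A = B ∨ A = Bᶜ := by
  by_contra hcon
  push_neg at hcon
  set S := (A \ B) ∪ (B \ A) with hS
  have hcut : G.cut S = ∅ := by
    ext e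
    have he := Finset.ext_iff.mp h e
    simp only [cut, Finset.mem_filter, Finset.mem_univ, true_and] at he
    simp only [cut, Finset.mem_filter, Finset.mem_univ, true_and, hS,
      Finset.mem_union, Finset.mem_sdiff, Finset.notMem_empty, iff_false]
    tauto
  have hne : S.Nonempty := by
    obtain ⟨v, hv⟩ : ∃ v, ¬(v ∈ A ↔ v ∈ B) := by
      by_contra h'
      push_neg at h'
      exact hcon.1 (Finset.ext fun v => h' v)
    exact ⟨v, by simp only [hS, Finset.mem_union, Finset.mem_sdiff]; tauto⟩
  have hnu : S ≠ univ := by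
    intro h'
    apply hcon.2
    ext v
    have hv : v ∈ S := h' ▸ Finset.mem_univ v
    simp only [hS, Finset.mem_union, Finset.mem_sdiff] at hv
    simp only [Finset.mem_compl]
    tauto
  have := h4 S hne hnu
  rw [hcut] at this
  simp at this



lemma exists_critical (h4 : G.EdgeConnected 4) :
    ∀ A : Finset V, A.Nonempty → A ≠ univ → (G.cut A).card ≤ 4 →
      ∃ B, B ⊆ A ∧ G.CriticalSet 4 B := by
  classical
  intro A
  induction A using Finset.strongInduction with
  | _ A ih =>
    intro hne hnu hcard
    by_cases hcrit : ∀ B : Finset V, B.Nonempty → B ⊂ A → 4 < (G.cut B).card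
    · exact ⟨A, le_refl _, hne, hnu, hcard, hcrit⟩
    · push_neg at hcrit
      obtain ⟨B, hBne, hBA, hBc⟩ := hcrit
      have hBnu : B ≠ univ := by
        have : B ⊂ univ := hBA.trans_subset (Finset.subset_univ A)
        exact Finset.ssubset_univ_iff.mp this
      obtain ⟨C, hCB, hC⟩ := ih B hBA hBne hBnu hBc
      exact ⟨C, hCB.trans hBA.subset, hC⟩

lemma crit_disjoint (h4 : G.EdgeConnected 4) {A B : Finset V}
    (hA : G.CriticalSet 4 A) (hB : G.CriticalSet 4 B) (hne : A ≠ B) :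
    Disjoint A B := by
  classical
  rw [Finset.disjoint_left]
  by_contra hcon
  push_neg at hcon
  obtain ⟨v, hvA, hvB⟩ := hcon
  have hint : (A ∩ B).Nonempty := ⟨v, Finset.mem_inter.mpr ⟨hvA, hvB⟩⟩
  by_cases hAB : A ⊆ B
  · have : A ⊂ B := hAB.ssubset_of_ne hne
    have h5 := hB.2.2.2 A hA.1 this
    have h6 := hA.2.2.1
    omega
  · by_cases hBA : B ⊆ A
    · have : B ⊂ A := hBA.ssubset_of_ne (Ne.symm hne)
      have := hA.2.2.2 B hB.1 this
      have := hB.2.2.1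
      omega
    · have hAdB : (A \ B).Nonempty := by
        rw [Finset.sdiff_nonempty]; exact hAB
      have hBdA : (B \ A).Nonempty := by
        rw [Finset.sdiff_nonempty]; exact hBA
      have h1 : A \ B ⊂ A := by
        refine Finset.ssubset_iff_subset_ne.mpr ⟨Finset.sdiff_subset, ?_⟩
        intro h
        have : v ∈ A \ B := by rw [h]; exact hvA
        simp [hvB] at this
      have h2 : B \ A ⊂ B := by
        refine Finset.ssubset_iff_subset_ne.mpr ⟨Finset.sdiff_subset, ?_⟩
        intro h
        have : v ∈ B \ A := by rw [h]; exact hvB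
        simp [hvA] at this
      have c1 := hA.2.2.2 (A \ B) hAdB h1
      have c2 := hB.2.2.2 (B \ A) hBdA h2
      have := G.posimod A B
      have := hA.2.2.1
      have := hB.2.2.1
      omega

lemma crit_card (h4 : G.EdgeConnected 4) (hc : (G.kCuts 4).card ≤ 5)
    (𝓒 : Finset (Finset V)) (h𝓒 : ∀ A, A ∈ 𝓒 ↔ G.CriticalSet 4 A) :
    𝓒.card ≤ 5 := by
  classical
  by_cases hpair : ∃ A ∈ 𝓒, Aᶜ ∈ 𝓒
  · obtain ⟨A, hA, hAc⟩ := hpair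
    have hsub : 𝓒 ⊆ {A, Aᶜ} := by
      intro B hB
      simp only [Finset.mem_insert, Finset.mem_singleton]
      by_contra hcon
      push_neg at hcon
      have d1 : Disjoint B A := crit_disjoint G h4 ((h𝓒 B).mp hB) ((h𝓒 A).mp hA) hcon.1
      have d2 : Disjoint B Aᶜ := crit_disjoint G h4 ((h𝓒 B).mp hB) ((h𝓒 Aᶜ).mp hAc) hcon.2
      have := Finset.disjoint_union_right.mpr ⟨d1, d2⟩
      rw [Finset.union_compl] at this
      have hBe : B = ∅ := by
        have h0 : ∀ x, x ∉ B := fun x hx => Finset.disjoint_left.mp this hx (Finset.mem_univ x)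
        exact Finset.eq_empty_of_forall_notMem h0
      have := ((h𝓒 B).mp hB).1
      simp [hBe] at this
    calc 𝓒.card ≤ ({A, Aᶜ} : Finset (Finset V)).card := Finset.card_le_card hsub
    _ ≤ 2 := Finset.card_insert_le _ _ |>.trans (by simp)
    _ ≤ 5 := by omega
  · push_neg at hpair
    refine le_trans (Finset.card_le_card_of_injOn G.cut ?_ ?_) hc
    · intro A hA
      have hA' := (h𝓒 A).mp hA
      refine Finset.mem_image.mpr ⟨A, Finset.mem_filter.mpr ⟨Finset.mem_univ _, hA'.1, hA'.2.1, ?_⟩, rfl⟩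
      exact le_antisymm hA'.2.2.1 (h4 A hA'.1 hA'.2.1)
    · intro A hA B hB heq
      rcases cut_eq_or G h4 heq with h | h
      · exact h
      · exfalso
        exact hpair B hB (by rw [← h]; exact hA)

lemma card_filter_sumtype {α β : Type} [Fintype α] [Fintype β] [DecidableEq α] [DecidableEq β]
    (p : α ⊕ β → Prop) [DecidablePred p] :
    (univ.filter p).card
      = (univ.filter fun a => p (Sum.inl a)).card + (univ.filter fun b => p (Sum.inr b)).card := by
  classical
  rw [Finset.card_filter, Finset.card_filter, Finset.card_filter]
  exact Fintype.sum_sum_type _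

/-- The auxiliary graph: a new vertex `none` joined by five new edges to
`w 0, …, w 4`. -/
def xgraph (G : Multigraph V E) (w : Fin 5 → V) : Multigraph (Option V) (E ⊕ Fin 5) where
  fst := Sum.elim (fun e => some (G.fst e)) (fun _ => none)
  snd := Sum.elim (fun e => some (G.snd e)) (fun j => some (w j))
  no_loop := by
    rintro (e | j)
    · simp [G.no_loop e]
    · simp

lemma xgraph_degree (w : Fin 5 → V) : (G.xgraph w).degree none = 5 := by
  classical
  unfold degree
  rw [card_filter_sumtype]
  have h1 : (univ.filter fun e : E => (G.xgraph w).Incident none (Sum.inl e)) = ∅ := by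
    ext e; simp [Incident, xgraph]
  have h2 : (univ.filter fun j : Fin 5 => (G.xgraph w).Incident none (Sum.inr j)) = univ := by
    ext j; simp [Incident, xgraph]
  rw [h1, h2]
  simp

lemma xgraph_cut_card (w : Fin 5 → V) (A' : Finset (Option V)) (hx : none ∉ A') :
    ((G.xgraph w).cut A').card
      = (G.cut (univ.filter fun v => some v ∈ A')).card
        + (univ.filter fun j : Fin 5 => w j ∈ (univ.filter fun v => some v ∈ A')).card := by
  classical
  set A : Finset V := univ.filter fun v => some v ∈ A' with hA
  have hmem : ∀ v : V, v ∈ A ↔ some v ∈ A' := by intro v; simp [hA]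
  unfold cut
  rw [card_filter_sumtype]
  congr 1
  · apply congrArg
    apply Finset.filter_congr
    intro e _
    simp only [xgraph, Sum.elim_inl, hmem]
  · apply congrArg
    apply Finset.filter_congr
    intro j _
    simp only [xgraph, Sum.elim_inr]
    constructor
    · intro h
      rw [hmem]
      by_contra hw
      exact h ⟨fun h' => absurd h' hx, fun h' => absurd h' hw⟩
    · intro h hiff
      exact hx (hiff.mpr ((hmem _).mp h))

lemma xgraph_edgeConnected (h4 : G.EdgeConnected 4) (w : Fin 5 → V)
    (hw : ∀ B : Finset V, G.CriticalSet 4 B → ∃ j, w j ∈ B) :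
    (G.xgraph w).EdgeConnected 5 := by
  classical
  have key : ∀ A' : Finset (Option V), A'.Nonempty → A' ≠ univ → none ∉ A' →
      5 ≤ ((G.xgraph w).cut A').card := by
    intro A' hne hnu hx
    rw [G.xgraph_cut_card w A' hx]
    set A : Finset V := univ.filter fun v => some v ∈ A' with hA
    have hAne : A.Nonempty := by
      obtain ⟨a, ha⟩ := hne
      match a with
      | none => exact absurd ha hx
      | some v => exact ⟨v, by simp [hA, ha]⟩
    by_cases hAu : A = univ
    · have h1 : G.cut A = ∅ := by
        ext e; simp [cut, hAu]
      have h2 : (univ.filter fun j : Fin 5 => w j ∈ A) = univ := by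
        ext j; simp [hAu]
      rw [h1, h2]
      simp
    · have hge : 4 ≤ (G.cut A).card := h4 A hAne hAu
      rcases lt_or_ge 4 (G.cut A).card with h | h
      · omega
      · obtain ⟨B, hBA, hB⟩ := G.exists_critical h4 A hAne hAu h
        obtain ⟨j, hj⟩ := hw B hB
        have : (univ.filter fun j : Fin 5 => w j ∈ A).Nonempty :=
          ⟨j, by simp [Finset.mem_filter, hBA hj]⟩
        have := Finset.card_pos.mpr this
        omega
  intro A' hne hnu
  by_cases hx : none ∈ A'
  · have h1 : A'ᶜ.Nonempty := by
      obtain ⟨v, hv⟩ : ∃ v, v ∉ A' := by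
        by_contra hcon
        push_neg at hcon
        exact hnu (Finset.eq_univ_iff_forall.mpr hcon)
      exact ⟨v, Finset.mem_compl.mpr hv⟩
    have h2 : A'ᶜ ≠ univ := (Finset.compl_ne_univ_iff_nonempty A').mpr hne
    have h3 : none ∉ A'ᶜ := by simp [hx]
    have := key A'ᶜ h1 h2 h3
    rwa [cut_compl] at this
  · exact key A' hne hnu hx

lemma xgraph_z3 (w : Fin 5 → V)
    (hext : (G.xgraph w).Z3ExtendableAt none) : G.Z3Connected := by
  classical
  intro β hβ
  set G' := G.xgraph w with hG'
  set β' : Option V → ZMod 3 := fun o =>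
    o.elim (5 : ZMod 3) (fun v => β v - ((univ.filter fun j : Fin 5 => w j = v).card : ZMod 3))
    with hβ'def
  have hβ' : IsBoundary β' := by
    unfold IsBoundary
    rw [Fintype.sum_option]
    have h5 : ∑ v : V, (((univ.filter fun j : Fin 5 => w j = v).card : ℕ) : ZMod 3) = (5 : ZMod 3) := by
      rw [← Nat.cast_sum]
      have h := Finset.card_eq_sum_card_fiberwise
        (f := w) (s := (univ : Finset (Fin 5))) (t := (univ : Finset V)) (fun x _ => mem_univ _)
      simp only [Finset.card_univ, Fintype.card_fin] at h
      rw [← h]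
      norm_num
    simp only [hβ'def, Option.elim]
    rw [Finset.sum_sub_distrib, hβ, h5]
    ring
  have ho5 : (univ.filter fun e' : E ⊕ Fin 5 => G'.tail (fun _ => true) e' = none).card = 5 := by
    rw [card_filter_sumtype]
    have e1 : (univ.filter fun e : E => G'.tail (fun _ => true) (Sum.inl e) = none) = ∅ := by
      ext e; simp [hG', xgraph, tail]
    have e2 : (univ.filter fun j : Fin 5 => G'.tail (fun _ => true) (Sum.inr j) = none) = univ := by
      ext j; simp [hG', xgraph, tail]
    rw [e1, e2]; simp
  have hi0 : (univ.filter fun e' : E ⊕ Fin 5 => G'.head (fun _ => true) e' = none).card = 0 := by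
    rw [card_filter_sumtype]
    have e1 : (univ.filter fun e : E => G'.head (fun _ => true) (Sum.inl e) = none) = ∅ := by
      ext e; simp [hG', xgraph, head]
    have e2 : (univ.filter fun j : Fin 5 => G'.head (fun _ => true) (Sum.inr j) = none) = ∅ := by
      ext j; simp [hG', xgraph, head]
    rw [e1, e2]; simp
  have hpre : ((G'.outDeg (fun _ => true) none - G'.inDeg (fun _ => true) none : ℤ) : ZMod 3)
      = β' none := by
    unfold outDeg inDeg
    rw [ho5, hi0]
    simp [hβ'def]
  obtain ⟨D, hDfix, hDor⟩ := hext β' hβ' (fun _ => true) hpre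
  have hDr : ∀ j : Fin 5, D (Sum.inr j) = true := by
    intro j
    exact hDfix (Sum.inr j) (Or.inl rfl)
  set Dfin : E → Bool := fun e => D (Sum.inl e) with hDfin
  refine ⟨Dfin, fun v => ?_⟩
  have hout : (univ.filter fun e' : E ⊕ Fin 5 => G'.tail D e' = some v).card
      = (univ.filter fun e : E => G.tail Dfin e = v).card := by
    rw [card_filter_sumtype]
    have e1 : (univ.filter fun e : E => G'.tail D (Sum.inl e) = some v)
        = (univ.filter fun e : E => G.tail Dfin e = v) := by
      apply Finset.filter_congr
      intro e _
      unfold tail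
      cases h : D (Sum.inl e) <;> simp [h, hG', xgraph, hDfin]
    have e2 : (univ.filter fun j : Fin 5 => G'.tail D (Sum.inr j) = some v) = ∅ := by
      ext j; simp [tail, hDr j, hG', xgraph]
    rw [e1, e2]; simp
  have hin : (univ.filter fun e' : E ⊕ Fin 5 => G'.head D e' = some v).card
      = (univ.filter fun e : E => G.head Dfin e = v).card
        + (univ.filter fun j : Fin 5 => w j = v).card := by
    rw [card_filter_sumtype]
    have e1 : (univ.filter fun e : E => G'.head D (Sum.inl e) = some v)
        = (univ.filter fun e : E => G.head Dfin e = v) := by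
      apply Finset.filter_congr
      intro e _
      unfold head
      cases h : D (Sum.inl e) <;> simp [h, hG', xgraph, hDfin]
    have e2 : (univ.filter fun j : Fin 5 => G'.head D (Sum.inr j) = some v)
        = (univ.filter fun j : Fin 5 => w j = v) := by
      apply Finset.filter_congr
      intro j _
      simp [head, hDr j, hG', xgraph]
    rw [e1, e2]
  have hor := hDor (some v)
  unfold outDeg inDeg at hor ⊢
  rw [hout, hin] at hor
  simp only [hβ'def, Option.elim] at hor
  push_cast at hor ⊢
  linear_combination hor

end Aux

/-- If every 5-edge-connected graph is `ℤ₃`-extendable at every vertex of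
degree 5, then every 4-edge-connected graph with at most five edge-cuts of
size 4 is `ℤ₃`-connected. -/
theorem stmt_11
    (hyp : ∀ (V E : Type) [Fintype V] [DecidableEq V] [Fintype E] [DecidableEq E] (G : Multigraph V E) (x : V),
      G.EdgeConnected 5 → G.degree x = 5 → G.Z3ExtendableAt x)
    {V E : Type} [Fintype V] [DecidableEq V] [Fintype E] [DecidableEq E] (G : Multigraph V E)
    (h4 : G.EdgeConnected 4) (hc : (G.kCuts 4).card ≤ 5) :
    G.Z3Connected := by
  classical
  rcases isEmpty_or_nonempty V with hV | hV
  · intro β hβ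
    exact ⟨fun e => (IsEmpty.false (G.fst e)).elim, fun v => (IsEmpty.false v).elim⟩
  · obtain ⟨v₀⟩ := hV
    set 𝓒 : Finset (Finset V) := univ.filter (fun A => G.CriticalSet 4 A) with h𝓒def
    have h𝓒 : ∀ A, A ∈ 𝓒 ↔ G.CriticalSet 4 A := by
      intro A; simp [h𝓒def, Finset.mem_filter]
    have hcard : 𝓒.card ≤ 5 := crit_card G h4 hc 𝓒 h𝓒
    set L := 𝓒.toList with hL
    have hlen : L.length ≤ 5 := by rw [hL, Finset.length_toList]; exact hcard
    set pt : Finset V → V := fun B => if h : B.Nonempty then h.choose else v₀ with hpt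
    set w : Fin 5 → V := fun j => pt (L.getD j ∅) with hw
    have hhit : ∀ B : Finset V, G.CriticalSet 4 B → ∃ j : Fin 5, w j ∈ B := by
      intro B hB
      have hBmem : B ∈ L := by rw [hL]; exact Finset.mem_toList.mpr ((h𝓒 B).mpr hB)
      obtain ⟨i, hi, hget⟩ := List.getElem_of_mem hBmem
      refine ⟨⟨i, lt_of_lt_of_le hi hlen⟩, ?_⟩
      rw [hw]
      simp only
      rw [List.getD_eq_getElem L ∅ (by simpa using hi), hget, hpt]
      simp only [dif_pos hB.1]
      exact hB.1.choose_spec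
    have hG' := G.xgraph_edgeConnected h4 w hhit
    have hdeg := G.xgraph_degree w
    have hext := hyp (Option V) (E ⊕ Fin 5) (G.xgraph w) none hG' hdeg
    exact G.xgraph_z3 w hext

end Multigraph
end
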